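/- Every nonempty reflection space E of ℤ is a coset of a subgroup: for any e ∈ E there exists a nonnegative integer p with E = pℤ + e. -/

import Mathlib

theorem reflection_space_int_coset {E : Set ℤ} (hne : E.Nonempty)
    (hE : ∀ x ∈ E, ∀ y ∈ E, 2 • x - y ∈ E) :
    ∀ e ∈ E, ∃ p : ℤ, 0 ≤ p ∧ E = {x : ℤ | ∃ k : ℤ, x = p * k + e} := by
  intro e he
  set S : Set ℤ := {s | s + e ∈ E} with hS
  have h0 : (0 : ℤ) ∈ S := by simpa [hS] using he
  have hop : ∀ a ∈ S, ∀ b ∈ S, 2 * a - b ∈ S := by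
    intro a ha b hb
    have h := hE (a + e) ha (b + e) hb
    have h2 : (2:ℕ) • (a + e) - (b + e) = (2 * a - b) + e := by
      rw [nsmul_eq_mul]; push_cast; ring
    rw [h2] at h
    exact h
  have hneg : ∀ a ∈ S, -a ∈ S := by
    intro a ha
    have := hop 0 h0 a ha
    simpa using this
  by_cases hz : ∀ s ∈ S, s = 0
  · refine ⟨0, le_refl 0, ?_⟩
    ext x
    constructor
    · intro hx
      have hxS : x - e ∈ S := by simpa [hS] using hx
      have := hz _ hxS
      exact ⟨0, by omega⟩
    · rintro ⟨k, rfl⟩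
      simpa using he
  · push_neg at hz
    obtain ⟨s, hsS, hs0⟩ := hz
    have hT : ∃ n : ℕ, 0 < n ∧ (n : ℤ) ∈ S := by
      refine ⟨s.natAbs, by positivity, ?_⟩
      rcases Int.natAbs_eq s with h | h
      · rw [← h]; exact hsS
      · have h' : ((s.natAbs : ℤ)) = -s := by omega
        rw [h']; exact hneg s hsS
    classical
    set dn := Nat.find hT with hdn
    obtain ⟨hdpos, hdS⟩ := Nat.find_spec hT
    set d : ℤ := (dn : ℤ) with hd
    have hdpos' : 0 < d := by rw [hd]; exact_mod_cast hdpos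
    have hmin : ∀ m : ℤ, 0 < m → m < d → m ∉ S := by
      intro m hm1 hm2 hmS
      have : ¬ (0 < m.natAbs ∧ (m.natAbs : ℤ) ∈ S) := Nat.find_min hT (by omega)
      apply this
      constructor
      · omega
      · rwa [Int.natAbs_of_nonneg hm1.le]
    -- shift by 2d
    have hshift : ∀ a ∈ S, ∀ m : ℤ, a + 2 * d * m ∈ S := by
      intro a ha m
      induction m using Int.induction_on with
      | zero => simpa using ha
      | succ n ih =>
          have := hop d hdS (-(a + 2 * d * n)) (hneg _ ih)
          have h2 : 2 * d - -(a + 2 * d * n) = a + 2 * d * (n + 1) := by ring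
          rwa [h2] at this
      | pred n ih =>
          have := hop (-d) (hneg _ hdS) (-(a + 2 * d * (-n))) (hneg _ ih)
          have h2 : 2 * (-d) - -(a + 2 * d * (-n)) = a + 2 * d * (-(n:ℤ) - 1) := by ring
          rwa [h2] at this
    have hmul : ∀ k : ℤ, d * k ∈ S := by
      intro k
      rcases Int.even_or_odd k with ⟨m, hm⟩ | ⟨m, hm⟩
      · have := hshift 0 h0 m
        have h2 : 0 + 2 * d * m = d * k := by rw [hm]; ring
        rwa [h2] at this
      · have := hshift d hdS m
        have h2 : d + 2 * d * m = d * k := by rw [hm]; ring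
        rwa [h2] at this
    have hdvd : ∀ x ∈ S, ∃ k : ℤ, x = d * k := by
      intro x hx
      set q := x / d with hq
      set r := x % d with hr
      have hx_eq : x = d * q + r := (Int.mul_ediv_add_emod x d).symm
      have hr0 : 0 ≤ r := Int.emod_nonneg x (by omega)
      have hrd : r < d := Int.emod_lt_of_pos x hdpos'
      rcases Int.even_or_odd q with ⟨m, hm⟩ | ⟨m, hm⟩
      · have hrS : r ∈ S := by
          have := hshift x hx (-m)
          have h2 : x + 2 * d * (-m) = r := by rw [hx_eq, hm]; ring
          rwa [h2] at this
        have : r = 0 := by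
          by_contra h
          exact hmin r (by omega) hrd hrS
        exact ⟨q, by omega⟩
      · have hdrS : d + r ∈ S := by
          have := hshift x hx (-m)
          have h2 : x + 2 * d * (-m) = d + r := by rw [hx_eq, hm]; ring
          rwa [h2] at this
        have hdmr : d - r ∈ S := by
          have := hop d hdS (d + r) hdrS
          have h2 : 2 * d - (d + r) = d - r := by ring
          rwa [h2] at this
        have : r = 0 := by
          by_contra h
          exact hmin (d - r) (by omega) (by omega) hdmr
        exact ⟨q, by omega⟩
    refine ⟨d, hdpos'.le, ?_⟩
    ext x
    constructor
    · intro hx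
      have hxS : x - e ∈ S := by simpa [hS] using hx
      obtain ⟨k, hk⟩ := hdvd _ hxS
      exact ⟨k, by omega⟩
    · rintro ⟨k, rfl⟩
      exact hmul k
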